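/- Let K be a field of characteristic zero, let 𝔰 be a Lie algebra over K, and let 𝔫 be a solvable Lie algebra endowed with a completely reducible action of 𝔰 by derivations. Then the Lie subalgebra [𝔰,𝔫] generated by all brackets [s,n] (s ∈ 𝔰, n ∈ 𝔫) is an ideal of 𝔫 and satisfies [𝔰,[𝔰,𝔫]] = [𝔰,𝔫]. -/

import Mathlib

/-- For a solvable Lie `𝔰`-algebra `𝔫` (a Lie algebra with a completely
reducible action of `𝔰` by derivations), the Lie subalgebra `[𝔰,𝔫]` generated by all
brackets `[s,n]` is an ideal of `𝔫` and satisfies `[𝔰,[𝔰,𝔫]] = [𝔰,𝔫]`. -/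
theorem stmt0 (K : Type*) [Field K] [CharZero K]
    (S : Type*) [LieRing S] [LieAlgebra K S]
    (N : Type*) [LieRing N] [LieAlgebra K N] [Module.Finite K N]
    (_hsolv : LieAlgebra.IsSolvable N)
    (i : S →ₗ⁅K⁆ LieDerivation K N N)
    (_hcr : ∀ p : Submodule K N, (∀ s : S, ∀ x ∈ p, i s x ∈ p) →
      ∃ q : Submodule K N, (∀ s : S, ∀ x ∈ q, i s x ∈ q) ∧ IsCompl p q) :
    (∀ y ∈ LieSubalgebra.lieSpan K N {x | ∃ (s : S) (n : N), i s n = x}, ∀ m : N,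
        ⁅m, y⁆ ∈ LieSubalgebra.lieSpan K N {x | ∃ (s : S) (n : N), i s n = x}) ∧
    LieSubalgebra.lieSpan K N
        {x | ∃ (s : S), ∃ n ∈ LieSubalgebra.lieSpan K N {x | ∃ (s : S) (n : N), i s n = x},
          i s n = x}
      = LieSubalgebra.lieSpan K N {x | ∃ (s : S) (n : N), i s n = x} := by
  classical
  set S₁ : Set N := {x | ∃ (s : S) (n : N), i s n = x} with hS₁
  set W : Submodule K N := Submodule.span K S₁ with hW
  set M : LieSubalgebra K N := LieSubalgebra.lieSpan K N S₁ with hM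
  have hWinv : ∀ s : S, ∀ x ∈ W, i s x ∈ W := fun s x _ =>
    Submodule.subset_span ⟨s, x, rfl⟩
  obtain ⟨q, hqinv, hcompl⟩ := _hcr W hWinv
  have hqfix : ∀ s : S, ∀ a ∈ q, i s a = 0 := by
    intro s a ha
    have h1 : i s a ∈ W := Submodule.subset_span ⟨s, a, rfl⟩
    have h2 : i s a ∈ q := hqinv s a ha
    exact (Submodule.mem_bot K).1 (hcompl.disjoint.le_bot ⟨h1, h2⟩)
  have hWM : (W : Set N) ⊆ M := by
    intro x hx
    have h : Submodule.span K S₁ ≤ M.toSubmodule :=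
      Submodule.span_le.2 (LieSubalgebra.subset_lieSpan)
    exact h hx
  have hdecomp : ∀ m : N, ∃ w ∈ W, ∃ a ∈ q, w + a = m := by
    intro m
    have : m ∈ W ⊔ q := by rw [hcompl.sup_eq_top]; trivial
    exact Submodule.mem_sup.1 this
  have hideal : ∀ y ∈ M, ∀ m : N, ⁅m, y⁆ ∈ M := by
    let P : LieSubalgebra K N :=
      { carrier := {x | x ∈ M ∧ ∀ m : N, ⁅m, x⁆ ∈ M}
        add_mem' := by
          rintro x y ⟨hx, hx'⟩ ⟨hy, hy'⟩
          exact ⟨M.add_mem hx hy, fun m => by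
            rw [lie_add]; exact M.add_mem (hx' m) (hy' m)⟩
        zero_mem' := ⟨M.zero_mem, fun m => by rw [lie_zero]; exact M.zero_mem⟩
        smul_mem' := by
          rintro c x ⟨hx, hx'⟩
          exact ⟨M.smul_mem c hx, fun m => by
            rw [lie_smul]; exact M.smul_mem c (hx' m)⟩
        lie_mem' := by
          rintro x y ⟨hx, hx'⟩ ⟨hy, hy'⟩
          refine ⟨M.lie_mem hx hy, fun m => ?_⟩
          rw [leibniz_lie m x y]
          exact M.add_mem (M.lie_mem (hx' m) hy) (M.lie_mem hx (hy' m)) }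
    have hgen : S₁ ⊆ P := by
      rintro _ ⟨s, n, rfl⟩
      refine ⟨LieSubalgebra.subset_lieSpan ⟨s, n, rfl⟩, fun m => ?_⟩
      obtain ⟨w, hw, a, ha, rfl⟩ := hdecomp m
      rw [add_lie]
      refine M.add_mem (M.lie_mem (hWM hw) (LieSubalgebra.subset_lieSpan ⟨s, n, rfl⟩)) ?_
      have hder : (i s) ⁅a, n⁆ = ⁅a, i s n⁆ + ⁅(i s) a, n⁆ :=
        LieDerivation.apply_lie_eq_add (i s) a n
      have heq : ⁅a, i s n⁆ = i s ⁅a, n⁆ := by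
        rw [hder, hqfix s a ha, zero_lie, add_zero]
      rw [heq]
      exact hWM (Submodule.subset_span ⟨s, _, rfl⟩)
    have hle : M ≤ P := (LieSubalgebra.lieSpan_le).2 hgen
    intro y hy m
    exact (hle hy).2 m
  refine ⟨hideal, ?_⟩
  apply le_antisymm
  · rw [LieSubalgebra.lieSpan_le]
    rintro _ ⟨s, n, hn, rfl⟩
    exact hWM (Submodule.subset_span ⟨s, n, rfl⟩)
  · rw [LieSubalgebra.lieSpan_le]
    rintro _ ⟨s, n, rfl⟩
    obtain ⟨w, hw, a, ha, rfl⟩ := hdecomp n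
    have heq : i s (w + a) = i s w := by
      rw [map_add, hqfix s a ha, add_zero]
    rw [heq]
    exact LieSubalgebra.subset_lieSpan ⟨s, w, hWM hw, rfl⟩
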